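/- Let G be the cluster group with presentation on generators t₁, t₂, t₃ subject to the relations t₁² = t₂² = t₃² = e, the braid relations t₁t₂t₁ = t₂t₁t₂, t₁t₃t₁ = t₃t₁t₃, t₂t₃t₂ = t₃t₂t₃, and the cycle relations t₁t₂t₃t₁ = t₂t₃t₁t₂ = t₃t₁t₂t₃. Then in G the identity t_i t_j t_i t_k = t_k t_i t_j t_i holds for every choice of pairwise distinct indices i, j, k ∈ {1, 2, 3}. -/

import Mathlib

/-- The relators of the cluster group presentation associated to the quiver of
mutation-Dynkin type A₃: the generators `t₁, t₂, t₃` (indexed by `0, 1, 2 : Fin 3`) are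
involutions, they satisfy the braid relations and the cycle relations. -/
def clusterRels : Set (FreeGroup (Fin 3)) :=
  { FreeGroup.of 0 ^ 2, FreeGroup.of 1 ^ 2, FreeGroup.of 2 ^ 2,
    (FreeGroup.of 0 * FreeGroup.of 1 * FreeGroup.of 0) *
      (FreeGroup.of 1 * FreeGroup.of 0 * FreeGroup.of 1)⁻¹,
    (FreeGroup.of 0 * FreeGroup.of 2 * FreeGroup.of 0) *
      (FreeGroup.of 2 * FreeGroup.of 0 * FreeGroup.of 2)⁻¹,
    (FreeGroup.of 1 * FreeGroup.of 2 * FreeGroup.of 1) *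
      (FreeGroup.of 2 * FreeGroup.of 1 * FreeGroup.of 2)⁻¹,
    (FreeGroup.of 0 * FreeGroup.of 1 * FreeGroup.of 2 * FreeGroup.of 0) *
      (FreeGroup.of 1 * FreeGroup.of 2 * FreeGroup.of 0 * FreeGroup.of 1)⁻¹,
    (FreeGroup.of 1 * FreeGroup.of 2 * FreeGroup.of 0 * FreeGroup.of 1) *
      (FreeGroup.of 2 * FreeGroup.of 0 * FreeGroup.of 1 * FreeGroup.of 2)⁻¹ }

/-- The cluster group of mutation-Dynkin type A₃. -/
abbrev ClusterGroupA3 : Type := PresentedGroup clusterRels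

/-- `t i` is the image in the cluster group of the generator `tᵢ₊₁`. -/
def t (i : Fin 3) : ClusterGroupA3 := PresentedGroup.of i

lemma rel_one {r : FreeGroup (Fin 3)} (h : r ∈ clusterRels) :
    (QuotientGroup.mk r : ClusterGroupA3) = 1 :=
  (QuotientGroup.eq_one_iff r).mpr (Subgroup.subset_normalClosure h)

lemma sq0 : t 0 * t 0 = 1 := by
  have h := rel_one (show FreeGroup.of (0:Fin 3) ^ 2 ∈ clusterRels from by
    unfold clusterRels; simp)
  simp [pow_two] at h; exact h

lemma sq1 : t 1 * t 1 = 1 := by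
  have h := rel_one (show FreeGroup.of (1:Fin 3) ^ 2 ∈ clusterRels from by
    unfold clusterRels; simp)
  simp [pow_two] at h; exact h

lemma sq2 : t 2 * t 2 = 1 := by
  have h := rel_one (show FreeGroup.of (2:Fin 3) ^ 2 ∈ clusterRels from by
    unfold clusterRels; simp)
  simp [pow_two] at h; exact h

lemma braid01 : t 0 * t 1 * t 0 = t 1 * t 0 * t 1 := by
  have h := rel_one (show (FreeGroup.of 0 * FreeGroup.of 1 * FreeGroup.of 0) *
      (FreeGroup.of 1 * FreeGroup.of 0 * FreeGroup.of 1)⁻¹ ∈ clusterRels from by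
    unfold clusterRels; simp)
  rw [QuotientGroup.mk_mul, QuotientGroup.mk_inv, mul_inv_eq_one] at h
  simp at h; exact h

lemma braid02 : t 0 * t 2 * t 0 = t 2 * t 0 * t 2 := by
  have h := rel_one (show (FreeGroup.of 0 * FreeGroup.of 2 * FreeGroup.of 0) *
      (FreeGroup.of 2 * FreeGroup.of 0 * FreeGroup.of 2)⁻¹ ∈ clusterRels from by
    unfold clusterRels; simp)
  rw [QuotientGroup.mk_mul, QuotientGroup.mk_inv, mul_inv_eq_one] at h
  simp at h; exact h

lemma braid12 : t 1 * t 2 * t 1 = t 2 * t 1 * t 2 := by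
  have h := rel_one (show (FreeGroup.of 1 * FreeGroup.of 2 * FreeGroup.of 1) *
      (FreeGroup.of 2 * FreeGroup.of 1 * FreeGroup.of 2)⁻¹ ∈ clusterRels from by
    unfold clusterRels; simp)
  rw [QuotientGroup.mk_mul, QuotientGroup.mk_inv, mul_inv_eq_one] at h
  simp at h; exact h

lemma cyc1 : t 0 * t 1 * t 2 * t 0 = t 1 * t 2 * t 0 * t 1 := by
  have h := rel_one (show (FreeGroup.of 0 * FreeGroup.of 1 * FreeGroup.of 2 * FreeGroup.of 0) *
      (FreeGroup.of 1 * FreeGroup.of 2 * FreeGroup.of 0 * FreeGroup.of 1)⁻¹ ∈ clusterRels from by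
    unfold clusterRels; simp)
  rw [QuotientGroup.mk_mul, QuotientGroup.mk_inv, mul_inv_eq_one] at h
  simp at h; exact h

lemma cyc2 : t 1 * t 2 * t 0 * t 1 = t 2 * t 0 * t 1 * t 2 := by
  have h := rel_one (show (FreeGroup.of 1 * FreeGroup.of 2 * FreeGroup.of 0 * FreeGroup.of 1) *
      (FreeGroup.of 2 * FreeGroup.of 0 * FreeGroup.of 1 * FreeGroup.of 2)⁻¹ ∈ clusterRels from by
    unfold clusterRels; simp)
  rw [QuotientGroup.mk_mul, QuotientGroup.mk_inv, mul_inv_eq_one] at h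
  simp at h; exact h

-- parametrized ("acting on x") versions
lemma ha (x : ClusterGroupA3) : t 0 * (t 0 * x) = x := by rw [← mul_assoc, sq0, one_mul]
lemma hb (x : ClusterGroupA3) : t 1 * (t 1 * x) = x := by rw [← mul_assoc, sq1, one_mul]
lemma hc (x : ClusterGroupA3) : t 2 * (t 2 * x) = x := by rw [← mul_assoc, sq2, one_mul]

lemma Bab (x : ClusterGroupA3) : t 0 * (t 1 * (t 0 * x)) = t 1 * (t 0 * (t 1 * x)) := by
  simp only [← mul_assoc]; rw [braid01]
lemma Bac (x : ClusterGroupA3) : t 0 * (t 2 * (t 0 * x)) = t 2 * (t 0 * (t 2 * x)) := by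
  simp only [← mul_assoc]; rw [braid02]
lemma Bbc (x : ClusterGroupA3) : t 1 * (t 2 * (t 1 * x)) = t 2 * (t 1 * (t 2 * x)) := by
  simp only [← mul_assoc]; rw [braid12]

lemma C1 (x : ClusterGroupA3) :
    t 0 * (t 1 * (t 2 * (t 0 * x))) = t 1 * (t 2 * (t 0 * (t 1 * x))) := by
  simp only [← mul_assoc]; rw [cyc1]
lemma C2 (x : ClusterGroupA3) :
    t 1 * (t 2 * (t 0 * (t 1 * x))) = t 2 * (t 0 * (t 1 * (t 2 * x))) := by
  simp only [← mul_assoc]; rw [cyc2]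
lemma C3 (x : ClusterGroupA3) :
    t 2 * (t 0 * (t 1 * (t 2 * x))) = t 0 * (t 1 * (t 2 * (t 0 * x))) :=
  ((C1 x).trans (C2 x)).symm

-- key commutation lemmas
lemma L1 (x : ClusterGroupA3) :
    t 2 * (t 0 * (t 1 * (t 0 * x))) = t 0 * (t 1 * (t 0 * (t 2 * x))) := by
  calc t 2 * (t 0 * (t 1 * (t 0 * x)))
      = t 2 * (t 0 * (t 1 * (t 2 * (t 2 * (t 0 * x))))) := by rw [hc]
    _ = t 0 * (t 1 * (t 2 * (t 0 * (t 2 * (t 0 * x))))) := C3 _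
    _ = t 0 * (t 1 * (t 2 * (t 2 * (t 0 * (t 2 * x))))) := by rw [Bac]
    _ = t 0 * (t 1 * (t 0 * (t 2 * x))) := by rw [hc]

lemma L2 (x : ClusterGroupA3) :
    t 0 * (t 1 * (t 2 * (t 1 * x))) = t 1 * (t 2 * (t 1 * (t 0 * x))) := by
  calc t 0 * (t 1 * (t 2 * (t 1 * x)))
      = t 0 * (t 1 * (t 2 * (t 0 * (t 0 * (t 1 * x))))) := by rw [ha]
    _ = t 1 * (t 2 * (t 0 * (t 1 * (t 0 * (t 1 * x))))) := C1 _
    _ = t 1 * (t 2 * (t 0 * (t 0 * (t 1 * (t 0 * x))))) := by rw [← Bab]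
    _ = t 1 * (t 2 * (t 1 * (t 0 * x))) := by rw [ha]

lemma L3 (x : ClusterGroupA3) :
    t 1 * (t 2 * (t 0 * (t 2 * x))) = t 2 * (t 0 * (t 2 * (t 1 * x))) := by
  calc t 1 * (t 2 * (t 0 * (t 2 * x)))
      = t 1 * (t 2 * (t 0 * (t 1 * (t 1 * (t 2 * x))))) := by rw [hb]
    _ = t 2 * (t 0 * (t 1 * (t 2 * (t 1 * (t 2 * x))))) := C2 _
    _ = t 2 * (t 0 * (t 1 * (t 1 * (t 2 * (t 1 * x))))) := by rw [← Bbc]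
    _ = t 2 * (t 0 * (t 2 * (t 1 * x))) := by rw [hb]

lemma L1' : t 0 * t 1 * t 0 * t 2 = t 2 * (t 0 * t 1 * t 0) := by
  have h := L1 1
  simp only [mul_one] at h
  simp only [mul_assoc]
  exact h.symm

lemma L2' : t 1 * t 2 * t 1 * t 0 = t 0 * (t 1 * t 2 * t 1) := by
  have h := L2 1
  simp only [mul_one] at h
  simp only [mul_assoc]
  exact h.symm

lemma L3' : t 2 * t 0 * t 2 * t 1 = t 1 * (t 2 * t 0 * t 2) := by
  have h := L3 1
  simp only [mul_one] at h
  simp only [mul_assoc]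
  exact h.symm

/-- In the cluster group, `tᵢtⱼtᵢt_k = t_k tᵢtⱼtᵢ` for all pairwise distinct `i, j, k`. -/
theorem stmt_12 (i j k : Fin 3) (hij : i ≠ j) (hik : i ≠ k) (hjk : j ≠ k) :
    t i * t j * t i * t k = t k * (t i * t j * t i) := by
  fin_cases i <;> fin_cases j <;> fin_cases k <;>
    first
    | exact absurd rfl hij
    | exact absurd rfl hik
    | exact absurd rfl hjk
    | exact L1'
    | exact L2'
    | exact L3'
    | (show t 1 * t 0 * t 1 * t 2 = t 2 * (t 1 * t 0 * t 1); rw [← braid01]; exact L1')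
    | (show t 0 * t 2 * t 0 * t 1 = t 1 * (t 0 * t 2 * t 0); rw [braid02]; exact L3')
    | (show t 2 * t 1 * t 2 * t 0 = t 0 * (t 2 * t 1 * t 2); rw [← braid12]; exact L2')
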